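/- Let h : {1, …, n} → {1, …, n} be a Hessenberg function and let 1 ≤ j < i ≤ n be such that the (i,j)-th box is a corner of h, i.e., h(j) = i and (if j > 1) h(j−1) ≤ i−1. Let W be the set of permutations w ∈ S_n satisfying: (a) w(j) − 1 = w(i), and (b) w^{−1}(w(r) − 1) ≤ h(r) for every r ≠ j with w(r) ≥ 2. Then every w_k^{(i,j)} with 1 ≤ k ≤ i−j belongs to W and has length i−j, every element of W has length at least i−j, and the elements of W of length exactly i−j are precisely the permutations w_k^{(i,j)} for 1 ≤ k ≤ i−j. -/

import Mathlib

open MvPolynomial Finset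

/-- The product of simple transpositions `s_a s_{a-1} ⋯ s_b` (descending indices),
where `s_r` interchanges `r` and `r+1`; the empty product (when `a < b`) is the identity. -/
def sdesc (a b : ℕ) : Equiv.Perm ℕ :=
  (((List.range' b (a + 1 - b)).reverse).map (fun r => Equiv.swap r (r + 1))).prod

/-- The product of simple transpositions `s_a s_{a+1} ⋯ s_b` (ascending indices);
the empty product (when `b < a`) is the identity. -/
def sasc (a b : ℕ) : Equiv.Perm ℕ :=
  ((List.range' a (b + 1 - a)).map (fun r => Equiv.swap r (r + 1))).prod

/-- The permutation `w_k^{(i,j)} = (s_{i-k} s_{i-k-1} ⋯ s_j)(s_{i-k+1} s_{i-k+2} ⋯ s_{i-1})`,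
regarded as a permutation of `ℕ` (supported on `{1, …, n}`). -/
def wkij (i j k : ℕ) : Equiv.Perm ℕ := sdesc (i - k) j * sasc (i - k + 1) (i - 1)

/-- The length (number of inversions among positions in `{1, …, n}`) of a permutation
of `ℕ` supported on `{1, …, n}`. -/
def permLen (n : ℕ) (w : Equiv.Perm ℕ) : ℕ :=
  ((Finset.Icc 1 n ×ˢ Finset.Icc 1 n).filter
    (fun p => p.1 < p.2 ∧ w p.2 < w p.1)).card



lemma sdesc_apply_aux (b d : ℕ) : ∀ x, sdesc (b + d) b x =
    if x = b then b + d + 1 else if b < x ∧ x ≤ b + d + 1 then x - 1 else x := by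
  induction d with
  | zero =>
    intro x
    have h1 : b + 0 + 1 - b = 1 := by omega
    simp only [sdesc, h1, List.range'_one, List.reverse_singleton, List.map_singleton,
      List.prod_singleton]
    rw [Equiv.swap_apply_def]
    split_ifs <;> omega
  | succ d ih =>
    intro x
    have h1 : b + (d + 1) + 1 - b = (d + 1) + 1 := by omega
    have h2 : b + d + 1 - b = d + 1 := by omega
    have h3 : b + 1 * (d + 1) = b + d + 1 := by omega
    have hstep : sdesc (b + (d + 1)) b = Equiv.swap (b + d + 1) (b + d + 2) * sdesc (b + d) b := by
      simp only [sdesc, h1, h2]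
      rw [List.range'_concat, h3, List.reverse_append, List.reverse_singleton,
        List.map_append, List.map_singleton, List.prod_append, List.prod_singleton]
    rw [hstep, Equiv.Perm.mul_apply, ih x, Equiv.swap_apply_def]
    split_ifs <;> omega

lemma sdesc_apply (a b x : ℕ) (hba : b ≤ a) : sdesc a b x =
    if x = b then a + 1 else if b < x ∧ x ≤ a + 1 then x - 1 else x := by
  obtain ⟨d, rfl⟩ := Nat.exists_eq_add_of_le hba
  exact sdesc_apply_aux b d x

lemma sasc_apply_aux (d : ℕ) : ∀ a x, sasc a (a + d) x =
    if a ≤ x ∧ x ≤ a + d then x + 1 else if x = a + d + 1 then a else x := by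
  induction d with
  | zero =>
    intro a x
    have h1 : a + 0 + 1 - a = 1 := by omega
    simp only [sasc, h1, List.range'_one, List.map_singleton, List.prod_singleton]
    rw [Equiv.swap_apply_def]
    split_ifs <;> omega
  | succ d ih =>
    intro a x
    have h1 : a + (d + 1) + 1 - a = (d + 1) + 1 := by omega
    have hstep : sasc a (a + (d + 1)) = Equiv.swap a (a + 1) * sasc (a + 1) (a + 1 + d) := by
      have h2 : a + 1 + d + 1 - (a + 1) = d + 1 := by omega
      simp only [sasc, h1, h2]
      rw [List.range'_succ, List.map_cons, List.prod_cons]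
    rw [hstep, Equiv.Perm.mul_apply, ih (a + 1) x, Equiv.swap_apply_def]
    split_ifs <;> omega

lemma sasc_apply (a b x : ℕ) (h : a ≤ b + 1) : sasc a b x =
    if a ≤ x ∧ x ≤ b then x + 1 else if x = b + 1 then a else x := by
  rcases eq_or_lt_of_le h with heq | hlt
  · have : b + 1 - a = 0 := by omega
    simp only [sasc, this, List.range'_zero, List.map_nil, List.prod_nil, Equiv.Perm.one_apply]
    split_ifs <;> omega
  · obtain ⟨d, rfl⟩ := Nat.exists_eq_add_of_le (by omega : a ≤ b)
    exact sasc_apply_aux d a x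

lemma wkij_apply (i j k x : ℕ) (hj : 1 ≤ j) (hji : j < i) (hk1 : 1 ≤ k) (hk2 : k ≤ i - j) :
    wkij i j k x = if x = j then i - k + 1 else if j < x ∧ x ≤ i - k then x - 1
      else if i - k < x ∧ x < i then x + 1 else if x = i then i - k else x := by
  have h1 : i - 1 + 1 = i := by omega
  rw [wkij, Equiv.Perm.mul_apply, sasc_apply _ _ _ (by omega),
    sdesc_apply _ _ _ (by omega : j ≤ i - k), h1]
  split_ifs <;> omega

lemma permLen_wkij (n i j k : ℕ) (hj : 1 ≤ j) (hji : j < i) (hin : i ≤ n)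
    (hk1 : 1 ≤ k) (hk2 : k ≤ i - j) : permLen n (wkij i j k) = i - j := by
  have hset : ((Finset.Icc 1 n ×ˢ Finset.Icc 1 n).filter
      (fun p => p.1 < p.2 ∧ wkij i j k p.2 < wkij i j k p.1)) =
      ({j} ×ˢ (insert i (Finset.Icc (j+1) (i-k)))) ∪ ((Finset.Icc (i-k+1) (i-1)) ×ˢ {i}) := by
    ext ⟨r, s⟩
    simp only [Finset.mem_filter, Finset.mem_product, Finset.mem_Icc, Finset.mem_union,
      Finset.mem_singleton, Finset.mem_insert]
    rw [wkij_apply i j k r hj hji hk1 hk2, wkij_apply i j k s hj hji hk1 hk2]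
    split_ifs <;> omega
  rw [permLen, hset, Finset.card_union_of_disjoint, Finset.card_product, Finset.card_product,
    Finset.card_insert_of_notMem (by simp [Finset.mem_Icc]; omega)]
  · simp only [Finset.card_singleton, Nat.card_Icc]
    omega
  · rw [Finset.disjoint_left]
    rintro ⟨r, s⟩ ha hb
    simp only [Finset.mem_product, Finset.mem_singleton, Finset.mem_Icc, Finset.mem_insert] at ha hb
    omega

lemma wkij_mem (n i j k : ℕ) (h : ℕ → ℕ)
    (hj : 1 ≤ j) (hji : j < i) (hin : i ≤ n)
    (hge : ∀ r, 1 ≤ r → r ≤ n → r ≤ h r)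
    (hk1 : 1 ≤ k) (hk2 : k ≤ i - j) :
    (∀ x, x ∉ Finset.Icc 1 n → wkij i j k x = x) ∧
    wkij i j k j = wkij i j k i + 1 ∧
    (∀ r, 1 ≤ r → r ≤ n → r ≠ j → 2 ≤ wkij i j k r →
      (wkij i j k)⁻¹ (wkij i j k r - 1) ≤ h r) := by
  have hval : ∀ x, wkij i j k x = if x = j then i - k + 1 else if j < x ∧ x ≤ i - k then x - 1
      else if i - k < x ∧ x < i then x + 1 else if x = i then i - k else x :=
    fun x => wkij_apply i j k x hj hji hk1 hk2
  have hinv : ∀ v x, wkij i j k x = v → (wkij i j k)⁻¹ v = x := by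
    intro v x hx; rw [← hx, Equiv.Perm.inv_def, Equiv.symm_apply_apply]
  refine ⟨?_, ?_, ?_⟩
  · intro x hx
    simp only [Finset.mem_Icc, not_and_or, not_le] at hx
    rw [hval]; split_ifs <;> omega
  · rw [hval j, hval i]; split_ifs <;> omega
  · intro r hr1 hrn hrj hr2
    have hhr := hge r hr1 hrn
    rw [hval r] at hr2 ⊢
    have hcase : r < j ∨ (j < r ∧ r ≤ i - k) ∨ (i - k < r ∧ r < i) ∨ r = i ∨ i < r := by omega
    rcases hcase with hc | hc | hc | rfl | hc
    · have hwr : (if r = j then i - k + 1 else if j < r ∧ r ≤ i - k then r - 1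
          else if i - k < r ∧ r < i then r + 1 else if r = i then i - k else r) = r := by
        split_ifs <;> omega
      rw [hwr] at hr2 ⊢
      rw [hinv (r - 1) (r - 1) (by rw [hval]; split_ifs <;> omega)]
      omega
    · have hwr : (if r = j then i - k + 1 else if j < r ∧ r ≤ i - k then r - 1
          else if i - k < r ∧ r < i then r + 1 else if r = i then i - k else r) = r - 1 := by
        split_ifs <;> omega
      rw [hwr] at hr2 ⊢
      by_cases hb : r = j + 1
      · rw [hinv (r - 1 - 1) (j - 1) (by rw [hval]; split_ifs <;> omega)]
        omega
      · rw [hinv (r - 1 - 1) (r - 1) (by rw [hval]; split_ifs <;> omega)]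
        omega
    · have hwr : (if r = j then i - k + 1 else if j < r ∧ r ≤ i - k then r - 1
          else if i - k < r ∧ r < i then r + 1 else if r = i then i - k else r) = r + 1 := by
        split_ifs <;> omega
      rw [hwr] at hr2 ⊢
      by_cases hb : r = i - k + 1
      · rw [hinv (r + 1 - 1) j (by rw [hval]; split_ifs <;> omega)]
        omega
      · rw [hinv (r + 1 - 1) (r - 1) (by rw [hval]; split_ifs <;> omega)]
        omega
    · have hwr : (if r = j then r - k + 1 else if j < r ∧ r ≤ r - k then r - 1
          else if r - k < r ∧ r < r then r + 1 else if r = r then r - k else r) = r - k := by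
        split_ifs <;> omega
      rw [hwr] at hr2 ⊢
      by_cases hb : r - k = j
      · rw [hinv (r - k - 1) (j - 1) (by rw [hval]; split_ifs <;> omega)]
        omega
      · rw [hinv (r - k - 1) (r - k) (by rw [hval]; split_ifs <;> omega)]
        omega
    · have hwr : (if r = j then i - k + 1 else if j < r ∧ r ≤ i - k then r - 1
          else if i - k < r ∧ r < i then r + 1 else if r = i then i - k else r) = r := by
        split_ifs <;> omega
      rw [hwr] at hr2 ⊢
      by_cases hb : r = i + 1
      · by_cases hb2 : k = 1
        · rw [hinv (r - 1) j (by rw [hval]; split_ifs <;> omega)]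
          omega
        · rw [hinv (r - 1) (i - 1) (by rw [hval]; split_ifs <;> omega)]
          omega
      · rw [hinv (r - 1) (r - 1) (by rw [hval]; split_ifs <;> omega)]
        omega


lemma core (n i j : ℕ) (hj : 1 ≤ j) (hji : j < i) (hin : i ≤ n)
    (w : Equiv.Perm ℕ)
    (hfix : ∀ x, x ∉ Finset.Icc 1 n → w x = x)
    (ha : w j = w i + 1) :
    i - j ≤ ((Finset.Icc 1 n ×ˢ Finset.Icc 1 n).filter
      (fun p => p.1 < p.2 ∧ w p.2 < w p.1)).card ∧
    (((Finset.Icc 1 n ×ˢ Finset.Icc 1 n).filter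
      (fun p => p.1 < p.2 ∧ w p.2 < w p.1)).card = i - j →
      ∃ k, 1 ≤ k ∧ k ≤ i - j ∧ ∀ x, w x = (if x = j then i - k + 1 else if j < x ∧ x ≤ i - k then x - 1
      else if i - k < x ∧ x < i then x + 1 else if x = i then i - k else x)) := by
  set F := ((Finset.Icc 1 n ×ˢ Finset.Icc 1 n).filter
      (fun p => p.1 < p.2 ∧ w p.2 < w p.1)) with hF
  have hmaps : ∀ x, 1 ≤ x → x ≤ n → 1 ≤ w x ∧ w x ≤ n := by
    intro x h1 h2
    by_contra hc
    have h3 : w (w x) = w x := hfix _ (by simp only [Finset.mem_Icc]; tauto)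
    have h4 := w.injective h3
    rw [h4] at hc
    tauto
  have hinvfix : ∀ x, x ∉ Finset.Icc 1 n → w⁻¹ x = x := by
    intro x hx
    conv_lhs => rw [← hfix x hx]
    rw [Equiv.Perm.inv_def, Equiv.symm_apply_apply]
  have hmaps' : ∀ x, 1 ≤ x → x ≤ n → 1 ≤ w⁻¹ x ∧ w⁻¹ x ≤ n := by
    intro x h1 h2
    by_contra hc
    have h3 : w⁻¹ (w⁻¹ x) = w⁻¹ x := hinvfix _ (by simp only [Finset.mem_Icc]; tauto)
    have h4 := (w⁻¹ : Equiv.Perm ℕ).injective h3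
    rw [h4] at hc
    tauto
  set f : ℕ → ℕ × ℕ := fun r => if w r < w j then ((j, r) : ℕ × ℕ) else (r, i) with hf
  have hmapsF : ∀ r ∈ Finset.Icc (j+1) i, f r ∈ F := by
    intro r hr
    rw [Finset.mem_Icc] at hr
    rw [hF, Finset.mem_filter, Finset.mem_product]
    by_cases hc : w r < w j
    · rw [hf]
      simp only [if_pos hc, Finset.mem_Icc]
      exact ⟨⟨⟨hj, by omega⟩, ⟨by omega, by omega⟩⟩, by omega, hc⟩
    · have hri : r ≠ i := by
        intro he
        rw [he] at hc
        omega
      rw [hf]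
      simp only [if_neg hc, Finset.mem_Icc]
      exact ⟨⟨⟨by omega, by omega⟩, ⟨by omega, by omega⟩⟩, by omega, by omega⟩
  have hinj : Set.InjOn f (Finset.Icc (j+1) i) := by
    intro x hx y hy hxy
    simp only [Finset.coe_Icc, Set.mem_Icc] at hx hy
    rw [hf] at hxy
    simp only at hxy
    split_ifs at hxy <;> rw [Prod.mk.injEq] at hxy <;> omega
  have hcard : i - j ≤ F.card := by
    have := Finset.card_le_card_of_injOn f hmapsF hinj
    rw [Nat.card_Icc] at this
    omega
  refine ⟨hcard, ?_⟩
  intro hlen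
  have himg : Finset.image f (Finset.Icc (j+1) i) = F := by
    apply Finset.eq_of_subset_of_card_le
    · intro p hp
      rw [Finset.mem_image] at hp
      obtain ⟨t, ht, rfl⟩ := hp
      exact hmapsF t ht
    · rw [Finset.card_image_of_injOn hinj, Nat.card_Icc, hlen]
      omega
  have key : ∀ r s : ℕ, 1 ≤ r → s ≤ n → r < s → w s < w r →
      (r = j ∧ s ≤ i) ∨ (s = i ∧ j < r) := by
    intro r s h1 h2 h3 h4
    have hrs : ((r, s) : ℕ × ℕ) ∈ F := by
      rw [hF, Finset.mem_filter, Finset.mem_product]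
      simp only [Finset.mem_Icc]
      exact ⟨⟨⟨h1, by omega⟩, ⟨by omega, h2⟩⟩, h3, h4⟩
    rw [← himg, Finset.mem_image] at hrs
    obtain ⟨t, ht, hft⟩ := hrs
    rw [Finset.mem_Icc] at ht
    rw [hf] at hft
    simp only at hft
    split_ifs at hft <;> rw [Prod.mk.injEq] at hft <;> omega
  -- w fixes everything below j
  have low : ∀ r, r < j → w r = r := by
    intro r
    induction r using Nat.strong_induction_on with
    | _ r IH =>
      intro hrj
      rcases Nat.eq_zero_or_pos r with rfl | hr1
      · exact hfix 0 (by simp)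
      have hrn : r ≤ n := by omega
      have h1 : ¬ w r < r := by
        intro hlt
        have h2 : w (w r) = w r := IH (w r) hlt (by omega)
        have h3 := w.injective h2
        omega
      have h2 : ¬ r < w r := by
        intro hlt
        have hws : w (w⁻¹ r) = r := w.apply_symm_apply r
        have hsm := hmaps' r hr1 hrn
        have hsr : ¬ w⁻¹ r < r := by
          intro hh
          have := IH (w⁻¹ r) hh (by omega)
          omega
        have hne : w⁻¹ r ≠ r := by intro he; rw [he] at hws; omega
        have hk := key r (w⁻¹ r) hr1 hsm.2 (by omega) (by omega)
        omega
      omega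
  have high_aux : ∀ d s, n - s = d → i < s → s ≤ n → w s = s := by
    intro d
    induction d using Nat.strong_induction_on with
    | _ d IH =>
      intro s hd hi hn
      have hs1 : 1 ≤ s := by omega
      have h1 : ¬ s < w s := by
        intro hlt
        have hws := hmaps s hs1 hn
        have h2 : w (w s) = w s := IH (n - w s) (by omega) (w s) rfl (by omega) hws.2
        have := w.injective h2
        omega
      have h2 : ¬ w s < s := by
        intro hlt
        have hws : w (w⁻¹ s) = s := w.apply_symm_apply s
        have hrm := hmaps' s hs1 hn
        have hrr : ¬ s < w⁻¹ s := by
          intro hh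
          have := IH (n - w⁻¹ s) (by omega) (w⁻¹ s) rfl (by omega) hrm.2
          omega
        have hne : w⁻¹ s ≠ s := by intro he; rw [he] at hws; omega
        have hk := key (w⁻¹ s) s hrm.1 hn (by omega) (by omega)
        omega
      omega
  have high : ∀ s, i < s → s ≤ n → w s = s := fun s u1 u2 => high_aux (n - s) s rfl u1 u2
  have range_mid : ∀ r, j ≤ r → r ≤ i → j ≤ w r ∧ w r ≤ i := by
    intro r h1 h2
    have hm := hmaps r (by omega) (by omega)
    constructor
    · by_contra hc
      push_neg at hc
      have h3 := low (w r) hc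
      have h4 := w.injective h3
      omega
    · by_contra hc
      push_neg at hc
      have h3 := high (w r) hc hm.2
      have h4 := w.injective h3
      omega
  have hai := range_mid i (by omega) le_rfl
  have haj := range_mid j le_rfl (by omega)
  rw [ha] at haj
  -- abbreviate a := w i
  have mid1 : ∀ r, j < r → r ≤ w i → w r = r - 1 := by
    intro r
    induction r using Nat.strong_induction_on with
    | _ r IH =>
      intro h1 h2
      have hrm := range_mid r (by omega) (by omega)
      have hA : ¬ w r < r - 1 := by
        intro hlt
        have h3 := IH (w r + 1) (by omega) (by omega) (by omega)
        have h4 : w (w r + 1) = w r := by omega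
        have h5 := w.injective h4
        omega
      have hB : ¬ r - 1 < w r := by
        intro hlt
        have hws : w (w⁻¹ (r-1)) = r - 1 := w.apply_symm_apply _
        have hsm := hmaps' (r - 1) (by omega) (by omega)
        have hs1 : ¬ w⁻¹ (r-1) < j := by intro hh; have := low _ hh; omega
        have hs2 : ¬ i < w⁻¹ (r-1) := by intro hh; have := high _ hh hsm.2; omega
        have hs3 : w⁻¹ (r-1) ≠ j := by intro hh; rw [hh, ha] at hws; omega
        have hs4 : w⁻¹ (r-1) ≠ i := by intro hh; rw [hh] at hws; omega
        have hs5 : ¬ (j < w⁻¹ (r-1) ∧ w⁻¹ (r-1) < r) := by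
          rintro ⟨u1, u2⟩
          have := IH _ u2 u1 (by omega)
          omega
        have hs6 : w⁻¹ (r-1) ≠ r := by intro hh; rw [hh] at hws; omega
        have hk := key r (w⁻¹ (r-1)) (by omega) hsm.2 (by omega) (by omega)
        omega
      omega
  have mid2_aux : ∀ d r, i - r = d → w i < r → r < i → w r = r + 1 := by
    intro d
    induction d using Nat.strong_induction_on with
    | _ d IH =>
      intro r hd h1 h2
      have hrm := range_mid r (by omega) (by omega)
      have hA : ¬ r + 1 < w r := by
        intro hlt
        have h3 := IH (i - (w r - 1)) (by omega) (w r - 1) rfl (by omega) (by omega)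
        have h4 : w (w r - 1) = w r := by omega
        have h5 := w.injective h4
        omega
      have hB : ¬ w r < r + 1 := by
        intro hlt
        have hws : w (w⁻¹ (r+1)) = r + 1 := w.apply_symm_apply _
        have hsm := hmaps' (r + 1) (by omega) (by omega)
        have hs1 : ¬ w⁻¹ (r+1) < j := by intro hh; have := low _ hh; omega
        have hs2 : ¬ i < w⁻¹ (r+1) := by intro hh; have := high _ hh hsm.2; omega
        have hs3 : w⁻¹ (r+1) ≠ j := by intro hh; rw [hh, ha] at hws; omega
        have hs4 : w⁻¹ (r+1) ≠ i := by intro hh; rw [hh] at hws; omega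
        have hs5 : ¬ (j < w⁻¹ (r+1) ∧ w⁻¹ (r+1) ≤ w i) := by
          rintro ⟨u1, u2⟩
          have := mid1 _ u1 u2
          omega
        have hs6 : ¬ (r < w⁻¹ (r+1) ∧ w⁻¹ (r+1) < i) := by
          rintro ⟨u1, u2⟩
          have := IH (i - w⁻¹ (r+1)) (by omega) _ rfl (by omega) u2
          omega
        have hs7 : w⁻¹ (r+1) ≠ r := by intro hh; rw [hh] at hws; omega
        have hk := key (w⁻¹ (r+1)) r (by omega) (by omega) (by omega) (by omega)
        omega
      omega
  refine ⟨i - w i, by omega, by omega, ?_⟩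
  intro x
  have e : i - (i - w i) = w i := by omega
  rw [e]
  split_ifs with h1 h2 h3 h4
  · rw [h1]; exact ha
  · exact mid1 x h2.1 h2.2
  · exact mid2_aux (i - x) x rfl h3.1 h3.2
  · rw [h4]
  · have hc : x < j ∨ i < x := by omega
    rcases hc with hc | hc
    · exact low x hc
    · rcases le_or_gt x n with hc2 | hc2
      · exact high x hc hc2
      · exact hfix x (by simp only [Finset.mem_Icc]; omega)

/-- Lemma 4.2 of the paper.  Let `h : {1, …, n} → {1, …, n}` be a
Hessenberg function (weakly increasing with `h(r) ≥ r`) whose `(i,j)`-th box is a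
corner (`h(j) = i`, and `h(j-1) ≤ i-1` if `j > 1`), where `1 ≤ j < i ≤ n`.  Let `W`
be the set of `w ∈ S_n` (permutations of `ℕ` fixing everything outside `{1, …, n}`)
with (a) `w(j) - 1 = w(i)` and (b) `w⁻¹(w(r) - 1) ≤ h(r)` for every position
`r ≠ j` with `w(r) ≥ 2`.  Then each `w_k^{(i,j)}` (`1 ≤ k ≤ i-j`) lies in `W` and
has length `i - j`, every element of `W` has length at least `i - j`, and the
elements of `W` of length exactly `i - j` are precisely the `w_k^{(i,j)}`. -/
theorem stmt15 (n i j : ℕ) (hj : 1 ≤ j) (hji : j < i) (hin : i ≤ n)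
    (h : ℕ → ℕ)
    (hmono : ∀ r s, 1 ≤ r → r ≤ s → s ≤ n → h r ≤ h s)
    (hge : ∀ r, 1 ≤ r → r ≤ n → r ≤ h r)
    (hle : ∀ r, 1 ≤ r → r ≤ n → h r ≤ n)
    (hcorner1 : h j = i)
    (hcorner2 : 1 < j → h (j - 1) ≤ i - 1) :
    ∀ W : Set (Equiv.Perm ℕ),
      W = {w : Equiv.Perm ℕ |
        (∀ x, x ∉ Finset.Icc 1 n → w x = x) ∧
        w j = w i + 1 ∧
        (∀ r, 1 ≤ r → r ≤ n → r ≠ j → 2 ≤ w r → w⁻¹ (w r - 1) ≤ h r)} →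
      (∀ k, 1 ≤ k → k ≤ i - j → wkij i j k ∈ W ∧ permLen n (wkij i j k) = i - j) ∧
      (∀ w ∈ W, i - j ≤ permLen n w) ∧
      (∀ w ∈ W, permLen n w = i - j → ∃ k, 1 ≤ k ∧ k ≤ i - j ∧ w = wkij i j k) := by
  intro W hW
  subst hW
  refine ⟨?_, ?_, ?_⟩
  · intro k hk1 hk2
    refine ⟨wkij_mem n i j k h hj hji hin hge hk1 hk2, permLen_wkij n i j k hj hji hin hk1 hk2⟩
  · rintro w ⟨hfix, ha, -⟩
    exact (core n i j hj hji hin w hfix ha).1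
  · rintro w ⟨hfix, ha, -⟩ hlen
    obtain ⟨k, hk1, hk2, hwx⟩ := (core n i j hj hji hin w hfix ha).2 hlen
    refine ⟨k, hk1, hk2, ?_⟩
    ext x
    rw [hwx x, wkij_apply i j k x hj hji hk1 hk2]
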